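/- Let n ≥ 1 and let Q ∈ ℝ[X_1,…,X_n] be a homogeneous polynomial of degree d such that the polynomial X_1 + ⋯ + X_n does not divide Q, and let N < d. Then there exists no function V : ℕⁿ → ℝ such that for every probability distribution p on [n], E[V(Φ)] = Q(p_1,…,p_n), where Φ is the fingerprint of an N-sample from p. (That is, Q(p) admits no unbiased estimator from fewer than d samples.) -/

import Mathlib

open Finset

/-- The fingerprint of a sample tuple: the count of occurrences of each element. -/
def fingerprint {N n : ℕ} (s : Fin N → Fin n) : Fin n → ℕ :=
  fun i => (Finset.univ.filter fun j => s j = i).card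

/-- Evaluation of a homogeneous polynomial at a scaled point. -/
lemma eval_mul_of_isHomogeneous {n m : ℕ} (φ : MvPolynomial (Fin n) ℝ)
    (hφ : φ.IsHomogeneous m) (c : ℝ) (x : Fin n → ℝ) :
    MvPolynomial.eval (fun i => c * x i) φ = c ^ m * MvPolynomial.eval x φ := by
  rw [MvPolynomial.eval_eq, MvPolynomial.eval_eq, Finset.mul_sum]
  apply Finset.sum_congr rfl
  intro d hd
  have hdeg : (d.sum fun _ k => k) = m := by
    have := hφ (MvPolynomial.mem_support_iff.mp hd)
    simpa [Finsupp.weight_apply] using this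
  have : ∏ i ∈ d.support, (c * x i) ^ d i
      = (∏ i ∈ d.support, c ^ d i) * ∏ i ∈ d.support, x i ^ d i := by
    rw [← Finset.prod_mul_distrib]
    exact Finset.prod_congr rfl fun i _ => mul_pow _ _ _
  rw [this, Finset.prod_pow_eq_pow_sum]
  have : ∑ i ∈ d.support, d i = m := by simpa [Finsupp.sum] using hdeg
  rw [this]; ring

theorem stmt13 {n : ℕ} (hn : 1 ≤ n) (d N : ℕ) (hN : N < d)
    (Q : MvPolynomial (Fin n) ℝ) (hQ : Q.IsHomogeneous d)
    (hdvd : ¬ (∑ i : Fin n, MvPolynomial.X i) ∣ Q) :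
    ¬ ∃ V : (Fin n → ℕ) → ℝ, ∀ p : Fin n → ℝ, (∀ i, 0 ≤ p i) → ∑ i, p i = 1 →
      ∑ s : Fin N → Fin n, (∏ j, p (s j)) * V (fingerprint s)
        = MvPolynomial.eval p Q := by
  rintro ⟨V, hV⟩
  classical
  -- the estimator polynomial
  set R : MvPolynomial (Fin n) ℝ :=
    ∑ s : Fin N → Fin n, MvPolynomial.C (V (fingerprint s)) * ∏ j, MvPolynomial.X (s j) with hR
  have hReval : ∀ p : Fin n → ℝ,
      MvPolynomial.eval p R = ∑ s : Fin N → Fin n, (∏ j, p (s j)) * V (fingerprint s) := by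
    intro p
    rw [hR, map_sum]
    apply Finset.sum_congr rfl
    intro s _
    simp [mul_comm]
  have hRhom : R.IsHomogeneous N := by
    apply MvPolynomial.IsHomogeneous.sum
    intro s _
    have : (∏ j : Fin N, MvPolynomial.X (R := ℝ) (s j)).IsHomogeneous N := by
      have := MvPolynomial.IsHomogeneous.prod (Finset.univ : Finset (Fin N))
        (fun j => MvPolynomial.X (R := ℝ) (s j)) (fun _ => 1)
        (fun j _ => MvPolynomial.isHomogeneous_X _ _)
      simpa using this
    simpa using this.C_mul (V (fingerprint s))
  -- the difference polynomial
  set S : MvPolynomial (Fin n) ℝ :=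
    Q - (∑ i : Fin n, MvPolynomial.X i) ^ (d - N) * R with hS
  -- S vanishes on nonnegative vectors with positive sum
  have hSzero : ∀ y : Fin n → ℝ, (∀ i, 0 ≤ y i) → 0 < ∑ i, y i →
      MvPolynomial.eval y S = 0 := by
    intro y hy hsum
    set t : ℝ := ∑ i, y i with ht
    have ht0 : t ≠ 0 := ne_of_gt hsum
    set p : Fin n → ℝ := fun i => y i / t with hp
    have hp0 : ∀ i, 0 ≤ p i := fun i => div_nonneg (hy i) (le_of_lt hsum)
    have hp1 : ∑ i, p i = 1 := by
      rw [hp, ← Finset.sum_div]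
      field_simp
      exact ht.symm
    have key := hV p hp0 hp1
    rw [← hReval] at key
    have hyp : ∀ i, y i = t * p i := by
      intro i; rw [hp]; field_simp
    have hyQ : MvPolynomial.eval y Q = t ^ d * MvPolynomial.eval p Q := by
      have : y = fun i => t * p i := funext hyp
      rw [this]; exact eval_mul_of_isHomogeneous Q hQ t p
    have hyR : MvPolynomial.eval y R = t ^ N * MvPolynomial.eval p R := by
      have : y = fun i => t * p i := funext hyp
      rw [this]; exact eval_mul_of_isHomogeneous R hRhom t p
    rw [hS]
    simp only [map_sub, map_mul, map_pow, map_sum, MvPolynomial.eval_X]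
    rw [← ht, hyQ, hyR, ← key, ← mul_assoc, ← pow_add, Nat.sub_add_cancel (le_of_lt hN), sub_self]
  -- one-variable trick: S vanishes everywhere
  have hSall : ∀ x : Fin n → ℝ, MvPolynomial.eval x S = 0 := by
    intro x
    set P : Polynomial ℝ :=
      MvPolynomial.aeval (fun i => Polynomial.C (x i) + Polynomial.X) S with hP
    have hPeval : ∀ u : ℝ, P.eval u = MvPolynomial.eval (fun i => x i + u) S := by
      intro u
      have h := MvPolynomial.eval₂_comp_left (Polynomial.evalRingHom u)
        (algebraMap ℝ (Polynomial ℝ)) (fun i => Polynomial.C (x i) + Polynomial.X) S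
      rw [hP, MvPolynomial.aeval_def, ← Polynomial.coe_evalRingHom, h]
      have h1 : (Polynomial.evalRingHom u).comp (algebraMap ℝ (Polynomial ℝ))
          = RingHom.id ℝ := by ext r; simp
      have h2 : (⇑(Polynomial.evalRingHom u) ∘ fun i => Polynomial.C (x i) + Polynomial.X)
          = fun i => x i + u := by funext i; simp
      rw [h1, h2]
      rfl
    have hProots : P = 0 := by
      apply Polynomial.eq_zero_of_infinite_isRoot
      apply Set.Infinite.mono (s := Set.Ioi ((∑ i, |x i|) + 1))
      · intro u hu
        simp only [Set.mem_Ioi] at hu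
        have hu0 : 0 < u := lt_of_le_of_lt (by positivity) hu
        have hxi : ∀ i, 0 ≤ x i + u := by
          intro i
          have h1 : |x i| ≤ ∑ j, |x j| :=
            Finset.single_le_sum (fun j _ => abs_nonneg (x j)) (Finset.mem_univ i)
          have h2 : -x i ≤ |x i| := neg_le_abs _
          linarith
        have hsum : 0 < ∑ i, (x i + u) := by
          rw [Finset.sum_add_distrib, Finset.sum_const, Finset.card_univ, Fintype.card_fin,
            nsmul_eq_mul]
          have h2 : (1:ℝ) * u ≤ (n:ℝ) * u := by
            apply mul_le_mul_of_nonneg_right _ (le_of_lt hu0)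
            exact_mod_cast hn
          have h1 : ∑ i, -|x i| ≤ ∑ i, x i :=
            Finset.sum_le_sum (fun i _ => neg_abs_le (x i))
          rw [Finset.sum_neg_distrib] at h1
          linarith
        show P.IsRoot u
        rw [Polynomial.IsRoot, hPeval u]
        exact hSzero _ hxi hsum
      · exact Set.Ioi_infinite _
    have := hPeval 0
    rw [hProots] at this
    simpa using this.symm
  have : S = 0 := by
    apply MvPolynomial.funext (q := 0)
    intro x
    simpa using hSall x
  apply hdvd
  have : Q = (∑ i : Fin n, MvPolynomial.X i) ^ (d - N) * R := by
    have := sub_eq_zero.mp this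
    exact this
  rw [this]
  exact Dvd.dvd.mul_right (dvd_pow_self _ (Nat.sub_ne_zero_of_lt hN)) R
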